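/- For every field k and every integer n ≥ 2 there exists a finite-dimensional k-algebra A of k-dimension 2n+4, which is not isomorphic to the direct product of two nonzero algebras, which has exactly n isomorphism classes of simple left A-modules, all of which are reflexive, and which is not self-injective. -/

import Mathlib

set_option linter.unusedSectionVars false
universe u

/-- The evaluation map `φ_M` from a left `R`-module `M` into its double `R`-dual
`M** = Hom_{Rᵒᵖ}(Hom_R(M, R), R)`. -/
def dualEval (R : Type u) [Ring R] (M : Type u) [AddCommGroup M] [Module R M] :
    M →ₗ[R] ((M →ₗ[R] R) →ₗ[Rᵐᵒᵖ] R) where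
  toFun m :=
    { toFun := fun f => f m
      map_add' := fun f g => rfl
      map_smul' := fun a f => rfl }
  map_add' m m' := by ext f; simp
  map_smul' a m := by ext f; simp

namespace LamCon

variable (k : Type u) [Field k] (m : ℕ)

/-- The underlying type of the algebra: components e (vertices), a (cycle arrows),
w (loop at ν), d (extra arrow ν→0), p = w*aν, q = aμ*d. -/
def Lam : Type u := (Fin (m+2) → k) × (Fin (m+2) → k) × k × k × k × k

namespace Lam

variable {k m}

def mk' (e a : Fin (m+2) → k) (w d p q : k) : Lam k m := (e, a, w, d, p, q)

def E (x : Lam k m) : Fin (m+2) → k := x.1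
def Aa (x : Lam k m) : Fin (m+2) → k := x.2.1
def W (x : Lam k m) : k := x.2.2.1
def D (x : Lam k m) : k := x.2.2.2.1
def P (x : Lam k m) : k := x.2.2.2.2.1
def Q (x : Lam k m) : k := x.2.2.2.2.2

@[ext] lemma ext {x y : Lam k m} (h1 : ∀ i, x.E i = y.E i) (h2 : ∀ i, x.Aa i = y.Aa i)
    (h3 : x.W = y.W) (h4 : x.D = y.D) (h5 : x.P = y.P) (h6 : x.Q = y.Q) : x = y := by
  obtain ⟨e, a, w, d, p, q⟩ := x
  obtain ⟨e', a', w', d', p', q'⟩ := y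
  simp only [E, Aa, W, D, P, Q] at h1 h2 h3 h4 h5 h6
  simp_all [funext h1, funext h2]
  rfl

instance : AddCommGroup (Lam k m) :=
  inferInstanceAs (AddCommGroup ((Fin (m+2) → k) × (Fin (m+2) → k) × k × k × k × k))

instance instModuleK : Module k (Lam k m) :=
  inferInstanceAs (Module k ((Fin (m+2) → k) × (Fin (m+2) → k) × k × k × k × k))

@[simp] lemma E_mk' (e a w d p q) (i : Fin (m+2)) : (mk' e a w d p q : Lam k m).E i = e i := rfl
@[simp] lemma Aa_mk' (e a w d p q) (i : Fin (m+2)) : (mk' e a w d p q : Lam k m).Aa i = a i := rfl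
@[simp] lemma W_mk' (e a : Fin (m+2) → k) (w d p q) : (mk' e a w d p q : Lam k m).W = w := rfl
@[simp] lemma D_mk' (e a : Fin (m+2) → k) (w d p q) : (mk' e a w d p q : Lam k m).D = d := rfl
@[simp] lemma P_mk' (e a : Fin (m+2) → k) (w d p q) : (mk' e a w d p q : Lam k m).P = p := rfl
@[simp] lemma Q_mk' (e a : Fin (m+2) → k) (w d p q) : (mk' e a w d p q : Lam k m).Q = q := rfl

@[simp] lemma E_add (x y : Lam k m) (i) : (x + y).E i = x.E i + y.E i := rfl
@[simp] lemma Aa_add (x y : Lam k m) (i) : (x + y).Aa i = x.Aa i + y.Aa i := rfl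
@[simp] lemma W_add (x y : Lam k m) : (x + y).W = x.W + y.W := rfl
@[simp] lemma D_add (x y : Lam k m) : (x + y).D = x.D + y.D := rfl
@[simp] lemma P_add (x y : Lam k m) : (x + y).P = x.P + y.P := rfl
@[simp] lemma Q_add (x y : Lam k m) : (x + y).Q = x.Q + y.Q := rfl

@[simp] lemma E_smul (c : k) (x : Lam k m) (i) : (c • x).E i = c * x.E i := rfl
@[simp] lemma Aa_smul (c : k) (x : Lam k m) (i) : (c • x).Aa i = c * x.Aa i := rfl
@[simp] lemma W_smul (c : k) (x : Lam k m) : (c • x).W = c * x.W := rfl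
@[simp] lemma D_smul (c : k) (x : Lam k m) : (c • x).D = c * x.D := rfl
@[simp] lemma P_smul (c : k) (x : Lam k m) : (c • x).P = c * x.P := rfl
@[simp] lemma Q_smul (c : k) (x : Lam k m) : (c • x).Q = c * x.Q := rfl

@[simp] lemma E_zero (i) : (0 : Lam k m).E i = 0 := rfl
@[simp] lemma Aa_zero (i) : (0 : Lam k m).Aa i = 0 := rfl
@[simp] lemma W_zero : (0 : Lam k m).W = 0 := rfl
@[simp] lemma D_zero : (0 : Lam k m).D = 0 := rfl
@[simp] lemma P_zero : (0 : Lam k m).P = 0 := rfl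
@[simp] lemma Q_zero : (0 : Lam k m).Q = 0 := rfl

@[simp] lemma E_neg (x : Lam k m) (i) : (-x).E i = -x.E i := rfl
@[simp] lemma Aa_neg (x : Lam k m) (i) : (-x).Aa i = -x.Aa i := rfl
@[simp] lemma W_neg (x : Lam k m) : (-x).W = -x.W := rfl
@[simp] lemma D_neg (x : Lam k m) : (-x).D = -x.D := rfl
@[simp] lemma P_neg (x : Lam k m) : (-x).P = -x.P := rfl
@[simp] lemma Q_neg (x : Lam k m) : (-x).Q = -x.Q := rfl

@[simp] lemma E_sub (x y : Lam k m) (i) : (x - y).E i = x.E i - y.E i := rfl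
@[simp] lemma Aa_sub (x y : Lam k m) (i) : (x - y).Aa i = x.Aa i - y.Aa i := rfl
@[simp] lemma W_sub (x y : Lam k m) : (x - y).W = x.W - y.W := rfl
@[simp] lemma D_sub (x y : Lam k m) : (x - y).D = x.D - y.D := rfl
@[simp] lemma P_sub (x y : Lam k m) : (x - y).P = x.P - y.P := rfl
@[simp] lemma Q_sub (x y : Lam k m) : (x - y).Q = x.Q - y.Q := rfl

end Lam

/-- vertex ν = n-1 -/
def nu : Fin (m+2) := ⟨m+1, by omega⟩
/-- vertex μ = n-2 -/
def mu : Fin (m+2) := ⟨m, by omega⟩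

variable {k m}

lemma mu_add_one : (mu m) + 1 = nu m := by
  simp [mu, nu, Fin.ext_iff, Fin.add_def, Nat.mod_eq_of_lt]

lemma nu_add_one : (nu m) + 1 = 0 := by
  simp [nu, Fin.ext_iff, Fin.add_def]

lemma mu_ne_nu : (mu m) ≠ nu m := by simp [mu, nu, Fin.ext_iff]
lemma nu_ne_zero : (nu m) ≠ 0 := by simp [nu, Fin.ext_iff]

namespace Lam

instance : One (Lam k m) := ⟨mk' (fun _ => 1) 0 0 0 0 0⟩
instance : Mul (Lam k m) :=
  ⟨fun x y => mk' (fun i => x.E i * y.E i)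
    (fun i => x.E i * y.Aa i + x.Aa i * y.E (i+1))
    (x.E (nu m) * y.W + x.W * y.E (nu m))
    (x.E (nu m) * y.D + x.D * y.E 0)
    (x.E (nu m) * y.P + x.P * y.E 0 + x.W * y.Aa (nu m))
    (x.E (mu m) * y.Q + x.Q * y.E 0 + x.Aa (mu m) * y.D)⟩

@[simp] lemma E_one (i) : (1 : Lam k m).E i = 1 := rfl
@[simp] lemma Aa_one (i) : (1 : Lam k m).Aa i = 0 := rfl
@[simp] lemma W_one : (1 : Lam k m).W = 0 := rfl
@[simp] lemma D_one : (1 : Lam k m).D = 0 := rfl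
@[simp] lemma P_one : (1 : Lam k m).P = 0 := rfl
@[simp] lemma Q_one : (1 : Lam k m).Q = 0 := rfl

@[simp] lemma E_mul (x y : Lam k m) (i) : (x * y).E i = x.E i * y.E i := rfl
@[simp] lemma Aa_mul (x y : Lam k m) (i) :
    (x * y).Aa i = x.E i * y.Aa i + x.Aa i * y.E (i+1) := rfl
@[simp] lemma W_mul (x y : Lam k m) :
    (x * y).W = x.E (nu m) * y.W + x.W * y.E (nu m) := rfl
@[simp] lemma D_mul (x y : Lam k m) :
    (x * y).D = x.E (nu m) * y.D + x.D * y.E 0 := rfl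
@[simp] lemma P_mul (x y : Lam k m) :
    (x * y).P = x.E (nu m) * y.P + x.P * y.E 0 + x.W * y.Aa (nu m) := rfl
@[simp] lemma Q_mul (x y : Lam k m) :
    (x * y).Q = x.E (mu m) * y.Q + x.Q * y.E 0 + x.Aa (mu m) * y.D := rfl

instance : Ring (Lam k m) where
  __ := (inferInstance : AddCommGroup (Lam k m))
  mul_assoc x y z := by
    ext i <;>
      simp only [E_mul, Aa_mul, W_mul, D_mul, P_mul, Q_mul, nu_add_one, mu_add_one] <;> ring
  one_mul x := by ext <;> simp
  mul_one x := by ext <;> simp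
  left_distrib x y z := by ext <;> simp <;> ring
  right_distrib x y z := by ext <;> simp <;> ring
  zero_mul x := by ext <;> simp
  mul_zero x := by ext <;> simp

/-- the algebra structure map -/
def algMap : k →+* Lam k m where
  toFun c := mk' (fun _ => c) 0 0 0 0 0
  map_one' := rfl
  map_mul' x y := by ext <;> simp
  map_zero' := rfl
  map_add' x y := by ext <;> simp

lemma algMap_apply (c : k) : (algMap c : Lam k m) = mk' (fun _ => c) 0 0 0 0 0 := rfl

instance : Algebra k (Lam k m) where
  algebraMap := algMap
  smul := (· • ·)
  commutes' c x := by ext <;> simp [algMap_apply] <;> ring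
  smul_def' c x := by ext <;> simp [algMap_apply]

@[simp] lemma E_algebraMap (c : k) (i) : (algebraMap k (Lam k m) c).E i = c := rfl
@[simp] lemma Aa_algebraMap (c : k) (i) : (algebraMap k (Lam k m) c).Aa i = 0 := rfl
@[simp] lemma W_algebraMap (c : k) : (algebraMap k (Lam k m) c).W = 0 := rfl
@[simp] lemma D_algebraMap (c : k) : (algebraMap k (Lam k m) c).D = 0 := rfl
@[simp] lemma P_algebraMap (c : k) : (algebraMap k (Lam k m) c).P = 0 := rfl
@[simp] lemma Q_algebraMap (c : k) : (algebraMap k (Lam k m) c).Q = 0 := rfl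

end Lam

end LamCon

namespace LamCon
variable {k : Type u} [Field k] {m : ℕ}
namespace Lam

/-- basis idempotents -/
def eps (j : Fin (m+2)) : Lam k m := mk' (Pi.single j 1) 0 0 0 0 0
/-- basis arrows -/
def ar (j : Fin (m+2)) : Lam k m := mk' 0 (Pi.single j 1) 0 0 0 0
def wb : Lam k m := mk' 0 0 1 0 0 0
def db : Lam k m := mk' 0 0 0 1 0 0
def pb : Lam k m := mk' 0 0 0 0 1 0
def qb : Lam k m := mk' 0 0 0 0 0 1

@[simp] lemma E_eps (i j : Fin (m+2)) : (eps j : Lam k m).E i = if i = j then 1 else 0 := by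
  simp [eps, Pi.single_apply]
@[simp] lemma Aa_eps (i j : Fin (m+2)) : (eps j : Lam k m).Aa i = 0 := rfl
@[simp] lemma W_eps (j : Fin (m+2)) : (eps j : Lam k m).W = 0 := rfl
@[simp] lemma D_eps (j : Fin (m+2)) : (eps j : Lam k m).D = 0 := rfl
@[simp] lemma P_eps (j : Fin (m+2)) : (eps j : Lam k m).P = 0 := rfl
@[simp] lemma Q_eps (j : Fin (m+2)) : (eps j : Lam k m).Q = 0 := rfl

@[simp] lemma E_ar (i j : Fin (m+2)) : (ar j : Lam k m).E i = 0 := rfl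
@[simp] lemma Aa_ar (i j : Fin (m+2)) : (ar j : Lam k m).Aa i = if i = j then 1 else 0 := by
  simp [ar, Pi.single_apply]
@[simp] lemma W_ar (j : Fin (m+2)) : (ar j : Lam k m).W = 0 := rfl
@[simp] lemma D_ar (j : Fin (m+2)) : (ar j : Lam k m).D = 0 := rfl
@[simp] lemma P_ar (j : Fin (m+2)) : (ar j : Lam k m).P = 0 := rfl
@[simp] lemma Q_ar (j : Fin (m+2)) : (ar j : Lam k m).Q = 0 := rfl

@[simp] lemma E_wb (i : Fin (m+2)) : (wb : Lam k m).E i = 0 := rfl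
@[simp] lemma Aa_wb (i : Fin (m+2)) : (wb : Lam k m).Aa i = 0 := rfl
@[simp] lemma W_wb : (wb : Lam k m).W = 1 := rfl
@[simp] lemma D_wb : (wb : Lam k m).D = 0 := rfl
@[simp] lemma P_wb : (wb : Lam k m).P = 0 := rfl
@[simp] lemma Q_wb : (wb : Lam k m).Q = 0 := rfl

@[simp] lemma E_db (i : Fin (m+2)) : (db : Lam k m).E i = 0 := rfl
@[simp] lemma Aa_db (i : Fin (m+2)) : (db : Lam k m).Aa i = 0 := rfl
@[simp] lemma W_db : (db : Lam k m).W = 0 := rfl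
@[simp] lemma D_db : (db : Lam k m).D = 1 := rfl
@[simp] lemma P_db : (db : Lam k m).P = 0 := rfl
@[simp] lemma Q_db : (db : Lam k m).Q = 0 := rfl

@[simp] lemma E_pb (i : Fin (m+2)) : (pb : Lam k m).E i = 0 := rfl
@[simp] lemma Aa_pb (i : Fin (m+2)) : (pb : Lam k m).Aa i = 0 := rfl
@[simp] lemma W_pb : (pb : Lam k m).W = 0 := rfl
@[simp] lemma D_pb : (pb : Lam k m).D = 0 := rfl
@[simp] lemma P_pb : (pb : Lam k m).P = 1 := rfl
@[simp] lemma Q_pb : (pb : Lam k m).Q = 0 := rfl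

@[simp] lemma E_qb (i : Fin (m+2)) : (qb : Lam k m).E i = 0 := rfl
@[simp] lemma Aa_qb (i : Fin (m+2)) : (qb : Lam k m).Aa i = 0 := rfl
@[simp] lemma W_qb : (qb : Lam k m).W = 0 := rfl
@[simp] lemma D_qb : (qb : Lam k m).D = 0 := rfl
@[simp] lemma P_qb : (qb : Lam k m).P = 0 := rfl
@[simp] lemma Q_qb : (qb : Lam k m).Q = 1 := rfl

/-- the identity linear equivalence to the product type -/
def toProd : Lam k m ≃ₗ[k] ((Fin (m+2) → k) × (Fin (m+2) → k) × k × k × k × k) where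
  toFun x := x
  invFun x := x
  map_add' _ _ := rfl
  map_smul' _ _ := rfl
  left_inv _ := rfl
  right_inv _ := rfl

instance : Module.Finite k (Lam k m) := Module.Finite.equiv (toProd (k := k) (m := m)).symm

lemma finrank_lam : Module.finrank k (Lam k m) = 2 * (m + 2) + 4 := by
  rw [(toProd (k := k) (m := m)).finrank_eq]
  simp [Module.finrank_prod, Module.finrank_pi]
  ring

end Lam
end LamCon

namespace LamCon
variable {k : Type u} [Field k] {m : ℕ}
open Lam

/-- the character of the algebra at vertex i -/
def chi (i : Fin (m+2)) : Lam k m →+* k where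
  toFun x := x.E i
  map_one' := rfl
  map_mul' _ _ := rfl
  map_zero' := rfl
  map_add' _ _ := rfl

/-- the simple module at vertex i : a copy of `k` -/
def Sv (k : Type u) (m : ℕ) (_i : Fin (m+2)) : Type u := k

instance (i : Fin (m+2)) : AddCommGroup (Sv k m i) := inferInstanceAs (AddCommGroup k)
instance (i : Fin (m+2)) : Module (Lam k m) (Sv k m i) := Module.compHom k (chi i)

/-- identification of `k` with `Sv k m i` -/
def toSv (i : Fin (m+2)) (s : k) : Sv k m i := s
def ofSv {i : Fin (m+2)} (s : Sv k m i) : k := s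

@[simp] lemma ofSv_toSv (i : Fin (m+2)) (s : k) : ofSv (toSv i s) = s := rfl
@[simp] lemma toSv_ofSv (i : Fin (m+2)) (s : Sv k m i) : toSv i (ofSv s) = s := rfl
@[simp] lemma ofSv_smul (i : Fin (m+2)) (x : Lam k m) (s : Sv k m i) :
    ofSv (x • s) = x.E i * ofSv s := rfl
@[simp] lemma ofSv_add (i : Fin (m+2)) (s t : Sv k m i) :
    ofSv (s + t) = ofSv s + ofSv t := rfl
@[simp] lemma ofSv_zero (i : Fin (m+2)) : ofSv (0 : Sv k m i) = 0 := rfl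
@[simp] lemma ofSv_eq_zero (i : Fin (m+2)) (s : Sv k m i) : ofSv s = 0 ↔ s = 0 := Iff.rfl
@[simp] lemma toSv_add (i : Fin (m+2)) (s t : k) : toSv i (s + t) = toSv i s + toSv i t := rfl
@[simp] lemma toSv_zero (i : Fin (m+2)) : toSv i (0 : k) = 0 := rfl
lemma smul_toSv (i : Fin (m+2)) (x : Lam k m) (s : k) :
    x • (toSv i s) = toSv i (x.E i * s) := rfl

instance (i : Fin (m+2)) : IsSimpleModule (Lam k m) (Sv k m i) where
  exists_pair_ne := ⟨⊥, ⊤, by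
    intro h
    have h1 : (toSv i 1) ∈ (⊥ : Submodule (Lam k m) (Sv k m i)) := h ▸ Submodule.mem_top
    rw [Submodule.mem_bot] at h1
    have := congrArg ofSv h1
    simpa using this⟩
  eq_bot_or_eq_top := by
    intro N
    rcases eq_or_ne N ⊥ with h | h
    · exact Or.inl h
    · right
      obtain ⟨c, hc, hc0⟩ := Submodule.exists_mem_ne_zero_of_ne_bot h
      rw [eq_top_iff]
      intro y _
      have hc0' : ofSv c ≠ 0 := hc0
      have hy : (algebraMap k (Lam k m) (ofSv y * (ofSv c)⁻¹)) • c = y := by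
        have h1 : ∀ (x : Lam k m), x • c = toSv i (x.E i * ofSv c) := fun _ => rfl
        rw [h1]
        have h2 : (algebraMap k (Lam k m) (ofSv y * (ofSv c)⁻¹)).E i
            = ofSv y * (ofSv c)⁻¹ := rfl
        rw [h2, mul_assoc, inv_mul_cancel₀ hc0', mul_one, toSv_ofSv]
      rw [← hy]
      exact N.smul_mem _ hc


variable {T : Type u} [AddCommGroup T] [Module (Lam k m) T]

namespace Lam

lemma algebraMap_mul_comm (c : k) (g : Lam k m) :
    algebraMap k (Lam k m) c * g = g * algebraMap k (Lam k m) c := Algebra.commutes c g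

lemma smul_eq_algebraMap_mul (c : k) (g : Lam k m) :
    c • g = algebraMap k (Lam k m) c * g := Algebra.smul_def c g

lemma smul_smul_eq (c : k) (g : Lam k m) (t : T) :
    (c • g) • t = g • (algebraMap k (Lam k m) c • t) := by
  rw [smul_eq_algebraMap_mul, algebraMap_mul_comm, mul_smul]

/-- If `g` satisfies a (left-twisted) character identity up to an error term `h` that kills `T`,
and `g * g = 0`, then `g` kills every simple module `T`. -/
lemma killgen (hT : IsSimpleModule (Lam k m) T) (g h : Lam k m) (c : Fin (m+2))
    (f : Lam k m → k)
    (hmul : ∀ x : Lam k m, x * g = x.E c • g + f x • h)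
    (hh : ∀ t : T, h • t = 0) (hgg : g * g = 0) : ∀ t : T, g • t = 0 := by
  classical
  have hcl : ∀ (x : Lam k m) (t : T), x • (g • t) =
      g • ((algebraMap k (Lam k m) (x.E c)) • t) := by
    intro x t
    have h1 : x • (g • t) = (x * g) • t := (mul_smul x g t).symm
    rw [h1, hmul, add_smul, smul_smul_eq, smul_eq_algebraMap_mul, mul_smul, hh, smul_zero,
      add_zero]
  -- the set {g • t} is a submodule
  let P : Submodule (Lam k m) T :=
    { carrier := {u | ∃ t, u = g • t}
      add_mem' := by rintro a b ⟨t1, rfl⟩ ⟨t2, rfl⟩; exact ⟨t1 + t2, (smul_add g t1 t2).symm⟩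
      zero_mem' := ⟨0, (smul_zero g).symm⟩
      smul_mem' := by rintro x a ⟨t, rfl⟩; exact ⟨_, hcl x t⟩ }
  have hgg' : ∀ t : T, g • (g • t) = 0 := by
    intro t; rw [← mul_smul, hgg, zero_smul]
  rcases hT.1.2 P with hbot | htop
  · intro t
    have : g • t ∈ P := ⟨t, rfl⟩
    rwa [hbot, Submodule.mem_bot] at this
  · intro t
    have : t ∈ P := htop ▸ Submodule.mem_top
    obtain ⟨t', rfl⟩ := this
    exact hgg' t'

lemma mul_pb (x : Lam k m) : x * pb = x.E (nu m) • pb + (0 : Lam k m → k) x • (0:Lam k m) := by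
  ext <;> simp
lemma mul_qb (x : Lam k m) : x * qb = x.E (mu m) • qb + (0 : Lam k m → k) x • (0:Lam k m) := by
  ext <;> simp
lemma mul_wb (x : Lam k m) : x * wb = x.E (nu m) • wb + (0 : Lam k m → k) x • (0:Lam k m) := by
  ext <;> simp
lemma mul_db (x : Lam k m) : x * db = x.E (nu m) • db + x.Aa (mu m) • qb := by
  ext <;> simp
lemma mul_ar (j : Fin (m+2)) (x : Lam k m) :
    x * ar j = x.E j • ar j + (if j = nu m then x.W else 0) • pb := by
  rcases eq_or_ne j (nu m) with rfl | hj
  · ext i <;> simp <;> split <;> simp_all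
  · ext i <;> simp [hj, Ne.symm hj] <;> split <;> simp_all

section kills
variable (hT : IsSimpleModule (Lam k m) T)
include hT

lemma pb_kills : ∀ t : T, (pb : Lam k m) • t = 0 := by
  refine killgen hT pb 0 (nu m) 0 mul_pb (fun t => by simp) (by ext <;> simp)
lemma qb_kills : ∀ t : T, (qb : Lam k m) • t = 0 := by
  refine killgen hT qb 0 (mu m) 0 mul_qb (fun t => by simp) (by ext <;> simp)
lemma wb_kills : ∀ t : T, (wb : Lam k m) • t = 0 := by
  refine killgen hT wb 0 (nu m) 0 mul_wb (fun t => by simp) (by ext <;> simp)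
lemma db_kills : ∀ t : T, (db : Lam k m) • t = 0 := by
  refine killgen hT db qb (nu m) (fun x => x.Aa (mu m)) mul_db (qb_kills hT) (by ext <;> simp)
lemma ar_kills (j : Fin (m+2)) : ∀ t : T, (ar j : Lam k m) • t = 0 := by
  refine killgen hT (ar j) pb j (fun x => if j = nu m then x.W else 0) (mul_ar j)
    (pb_kills hT) (by ext <;> simp)

omit hT in
lemma sum_E (s : Finset (Fin (m+2))) (f : Fin (m+2) → Lam k m) (i : Fin (m+2)) :
    (∑ j ∈ s, f j).E i = ∑ j ∈ s, (f j).E i := by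
  classical
  induction s using Finset.induction with
  | empty => simp
  | @insert a s h ih => simp_all [Finset.sum_insert h]

omit hT in
lemma sum_W (s : Finset (Fin (m+2))) (f : Fin (m+2) → Lam k m) :
    (∑ j ∈ s, f j).W = ∑ j ∈ s, (f j).W := by
  classical
  induction s using Finset.induction with
  | empty => simp
  | @insert a s h ih => simp_all [Finset.sum_insert h]

omit hT in
lemma sum_Aa (s : Finset (Fin (m+2))) (f : Fin (m+2) → Lam k m) (i : Fin (m+2)) :
    (∑ j ∈ s, f j).Aa i = ∑ j ∈ s, (f j).Aa i := by
  classical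
  induction s using Finset.induction with
  | empty => simp
  | @insert a s h ih => simp_all [Finset.sum_insert h]

omit hT in
lemma sum_D (s : Finset (Fin (m+2))) (f : Fin (m+2) → Lam k m) :
    (∑ j ∈ s, f j).D = ∑ j ∈ s, (f j).D := by
  classical
  induction s using Finset.induction with
  | empty => simp
  | @insert a s h ih => simp_all [Finset.sum_insert h]

omit hT in
lemma sum_P (s : Finset (Fin (m+2))) (f : Fin (m+2) → Lam k m) :
    (∑ j ∈ s, f j).P = ∑ j ∈ s, (f j).P := by
  classical
  induction s using Finset.induction with
  | empty => simp
  | @insert a s h ih => simp_all [Finset.sum_insert h]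

omit hT in
lemma sum_Q (s : Finset (Fin (m+2))) (f : Fin (m+2) → Lam k m) :
    (∑ j ∈ s, f j).Q = ∑ j ∈ s, (f j).Q := by
  classical
  induction s using Finset.induction with
  | empty => simp
  | @insert a s h ih => simp_all [Finset.sum_insert h]

/-- every element with vanishing `E`-components kills a simple module -/
lemma rad_kills (r : Lam k m) (hr : ∀ i, r.E i = 0) : ∀ t : T, r • t = 0 := by
  classical
  have hdecomp : r = (∑ j : Fin (m+2), r.Aa j • ar j) + r.W • wb + r.D • db
      + r.P • pb + r.Q • qb := by
    ext i <;>
      simp [sum_E, sum_Aa, sum_W, sum_D, sum_P, sum_Q, hr, Finset.sum_ite_eq, eq_comm]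
  intro t
  rw [hdecomp]
  simp only [add_smul, Finset.sum_smul, smul_smul_eq]
  rw [wb_kills hT, db_kills hT, pb_kills hT, qb_kills hT]
  simp [smul_smul_eq, ar_kills hT]
end kills

lemma one_eq_sum_eps : (1 : Lam k m) = ∑ j : Fin (m+2), eps j := by
  classical
  ext i <;> simp [sum_E, sum_Aa, sum_W, sum_D, sum_P, sum_Q, Finset.sum_ite_eq]

lemma mul_eps_sub (x : Lam k m) (i j : Fin (m+2)) :
    (x * eps i - algebraMap k (Lam k m) (x.E i) * eps i).E j = 0 := by
  classical
  rcases eq_or_ne j i with rfl | h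
  · simp
  · simp [h]

/-- classification: every simple module is isomorphic to some `Sv k m i` -/
theorem simple_classify (hT : IsSimpleModule (Lam k m) T) :
    ∃ i : Fin (m+2), Nonempty (T ≃ₗ[Lam k m] Sv k m i) := by
  classical
  have : Nontrivial T := IsSimpleModule.nontrivial (Lam k m) T
  obtain ⟨t0, ht0⟩ := exists_ne (0 : T)
  -- find i with eps i • t0 ≠ 0
  have hsum : ∑ j : Fin (m+2), (eps j : Lam k m) • t0 = t0 := by
    rw [← Finset.sum_smul, ← one_eq_sum_eps, one_smul]
  have hex : ∃ i, (eps i : Lam k m) • t0 ≠ 0 := by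
    by_contra h
    push_neg at h
    apply ht0
    rw [← hsum]
    simp [h]
  obtain ⟨i, hs⟩ := hex
  set s : T := (eps i : Lam k m) • t0 with hs_def
  -- key identity
  have key : ∀ x : Lam k m, x • s = algebraMap k (Lam k m) (x.E i) • s := by
    intro x
    have h1 : x • s = (x * eps i) • t0 := by rw [hs_def, ← mul_smul]
    have h2 : algebraMap k (Lam k m) (x.E i) • s
        = (algebraMap k (Lam k m) (x.E i) * eps i) • t0 := by rw [hs_def, ← mul_smul]
    rw [h1, h2]
    have h3 : x * eps i = algebraMap k (Lam k m) (x.E i) * eps i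
        + (x * eps i - algebraMap k (Lam k m) (x.E i) * eps i) := by abel
    rw [h3, add_smul, rad_kills hT _ (mul_eps_sub x i), add_zero]
  -- build the equivalence
  refine ⟨i, ⟨?_⟩⟩
  refine LinearEquiv.symm (LinearEquiv.ofBijective ⟨⟨fun c => algebraMap k (Lam k m) (ofSv c) • s,
    fun a b => ?_⟩, fun x c => ?_⟩ ⟨fun a b hab => ?_, fun t => ?_⟩)
  · show algebraMap k (Lam k m) (ofSv a + ofSv b) • s = _
    rw [map_add, add_smul]
  · show algebraMap k (Lam k m) (x.E i * ofSv c) • s = x • (algebraMap k (Lam k m) (ofSv c) • s)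
    have hgoal : x • (algebraMap k (Lam k m) (ofSv c) • s)
        = algebraMap k (Lam k m) (x.E i * ofSv c) • s := by
      rw [← mul_smul, ← Algebra.commutes, mul_smul, key, ← mul_smul, ← map_mul,
        mul_comm (ofSv c) (x.E i)]
    exact hgoal.symm
  · -- injectivity
    by_contra hne
    have hab' : ofSv a ≠ ofSv b := fun h => hne (congrArg (toSv i) h)
    have h0 : algebraMap k (Lam k m) (ofSv a - ofSv b) • s = 0 := by
      rw [map_sub, sub_smul]
      simp only [LinearMap.coe_mk, AddHom.coe_mk] at hab
      rw [hab, sub_self]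
    have : s = 0 := by
      have := congrArg (fun u => algebraMap k (Lam k m) (ofSv a - ofSv b)⁻¹ • u) h0
      simp only [smul_zero] at this
      rw [← mul_smul, ← map_mul, inv_mul_cancel₀ (sub_ne_zero.mpr hab'), map_one, one_smul]
        at this
      exact this
    exact hs this
  · -- surjectivity
    have hspan : Submodule.span (Lam k m) {s} = ⊤ := by
      rcases hT.1.2 (Submodule.span (Lam k m) {s}) with h | h
      · exfalso
        apply hs
        have : s ∈ Submodule.span (Lam k m) {s} := Submodule.mem_span_singleton_self s
        rwa [h, Submodule.mem_bot] at this
      · exact h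
    have ht : t ∈ Submodule.span (Lam k m) {s} := hspan ▸ Submodule.mem_top
    obtain ⟨x, hx⟩ := Submodule.mem_span_singleton.mp ht
    exact ⟨toSv i (x.E i), by rw [← hx, key]; rfl⟩

/-- the simple modules are pairwise non-isomorphic -/
theorem sv_not_iso {i j : Fin (m+2)} (h : i ≠ j) : IsEmpty (Sv k m i ≃ₗ[Lam k m] Sv k m j) := by
  constructor
  intro e
  have hEi : ((eps i : Lam k m)).E i * (1:k) = 1 := by simp
  have h1 : (eps i : Lam k m) • (toSv i (1:k)) = toSv i (1:k) := by
    rw [smul_toSv, hEi]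
  have h2 : ofSv (e (toSv i (1:k))) = 0 := by
    have hsm := e.map_smul (eps i) (toSv i (1:k))
    rw [h1] at hsm
    have h3 := congrArg ofSv hsm
    rw [ofSv_smul] at h3
    have hEj : ((eps i : Lam k m)).E j = 0 := by
      simp [Ne.symm h]
    rw [hEj, zero_mul] at h3
    exact h3
  have h4 : e (toSv i (1:k)) = 0 := h2
  have h5 : toSv i (1:k) = 0 := by
    have := congrArg e.symm h4
    simpa using this
  have h6 := congrArg ofSv h5
  simp at h6


/-! ### duals of the simple modules -/

instance : SMulCommClass (Lam k m) k (Lam k m) := SMulCommClass.symm _ _ _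

lemma algsmul (c : k) (y : Lam k m) : (algebraMap k (Lam k m) c) • y = c • y := by
  rw [smul_eq_mul, ← Algebra.smul_def]

/-- make an element of the dual of `Sv k m i` out of a left character vector -/
def mkD (i : Fin (m+2)) (g : Lam k m) (hg : ∀ x : Lam k m, x * g = x.E i • g) :
    Sv k m i →ₗ[Lam k m] Lam k m where
  toFun c := ofSv c • g
  map_add' a b := by show (ofSv a + ofSv b) • g = _; rw [add_smul]
  map_smul' x c := by
    show (x.E i * ofSv c) • g = x • (ofSv c • g)
    rw [smul_eq_mul, mul_smul_comm, hg, smul_smul, mul_comm]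

@[simp] lemma mkD_apply (i : Fin (m+2)) (g : Lam k m) (hg) (c : Sv k m i) :
    mkD i g hg c = ofSv c • g := rfl

lemma lc_ar {i : Fin (m+2)} (hi : i ≠ nu m) :
    ∀ x : Lam k m, x * ar i = x.E i • ar i := by
  intro x
  have := mul_ar i x
  rw [if_neg hi] at this
  simpa using this

lemma lc_wb : ∀ x : Lam k m, x * wb = x.E (nu m) • wb := fun x => by simpa using mul_wb x
lemma lc_pb : ∀ x : Lam k m, x * pb = x.E (nu m) • pb := fun x => by simpa using mul_pb x
lemma lc_qb : ∀ x : Lam k m, x * qb = x.E (mu m) • qb := fun x => by simpa using mul_qb x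

lemma ar_mul_right {i : Fin (m+2)} (hi : i ≠ mu m) (x : Lam k m) :
    ar i * x = x.E (i+1) • ar i := by
  ext j <;> simp [hi, eq_comm] <;> split <;> simp_all

lemma armu_mul_right (x : Lam k m) :
    ar (mu m) * x = x.E (nu m) • ar (mu m) + x.D • qb := by
  ext j <;> simp [eq_comm] <;> split <;> simp_all [mu_add_one]

lemma wb_mul_right (x : Lam k m) :
    wb * x = x.E (nu m) • wb + x.Aa (nu m) • pb := by
  ext j <;> simp [mul_comm]

lemma pb_mul_right (x : Lam k m) : pb * x = x.E 0 • pb := by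
  ext j <;> simp [mul_comm]

lemma qb_mul_right (x : Lam k m) : qb * x = x.E 0 • qb := by
  ext j <;> simp [mul_comm]

/-- any element of the dual is determined by its value at 1, which is a character vector -/
lemma dual_apply_eq (i : Fin (m+2)) (f : Sv k m i →ₗ[Lam k m] Lam k m) (c : Sv k m i) :
    f c = ofSv c • f (toSv i (1:k)) := by
  have h1 : algebraMap k (Lam k m) (ofSv c) • toSv i (1:k) = c := by
    rw [smul_toSv, E_algebraMap, mul_one, toSv_ofSv]
  conv_lhs => rw [← h1]
  rw [map_smul, algsmul]

lemma dual_val_lc (i : Fin (m+2)) (f : Sv k m i →ₗ[Lam k m] Lam k m) :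
    ∀ x : Lam k m, x * (f (toSv i (1:k))) = x.E i • (f (toSv i (1:k))) := by
  intro x
  have h2 : x • toSv i (1:k) = algebraMap k (Lam k m) (x.E i) • toSv i (1:k) := by
    rw [smul_toSv, smul_toSv, E_algebraMap]
  calc x * f (toSv i (1:k)) = x • f (toSv i (1:k)) := by rw [smul_eq_mul]
    _ = f (x • toSv i (1:k)) := (map_smul f x _).symm
    _ = f (algebraMap k (Lam k m) (x.E i) • toSv i (1:k)) := by rw [h2]
    _ = algebraMap k (Lam k m) (x.E i) • f (toSv i (1:k)) := map_smul f _ _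
    _ = x.E i • f (toSv i (1:k)) := algsmul _ _

section LC
variable {i : Fin (m+2)} {v : Lam k m} (hv : ∀ x : Lam k m, x * v = x.E i • v)
include hv

lemma LC_E (j : Fin (m+2)) : v.E j = 0 := by
  have h := congrArg (fun z => z.Aa (j-1)) (hv (ar (j-1)))
  simpa using h

lemma LC_Aa {j : Fin (m+2)} (hj : j ≠ i) : v.Aa j = 0 := by
  have h := congrArg (fun z => z.Aa j) (hv (eps j))
  simpa [Ne.symm hj] using h

lemma LC_Aanu : v.Aa (nu m) = 0 := by
  have h := congrArg (fun z => z.P) (hv wb)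
  simpa using h

lemma LC_D : v.D = 0 := by
  have h := congrArg (fun z => z.Q) (hv (ar (mu m)))
  simpa using h

lemma LC_W (hi : i ≠ nu m) : v.W = 0 := by
  have h := congrArg (fun z => z.W) (hv (eps (nu m)))
  simpa [hi] using h

lemma LC_P (hi : i ≠ nu m) : v.P = 0 := by
  have h := congrArg (fun z => z.P) (hv (eps (nu m)))
  simpa [hi, LC_E hv 0] using h

lemma LC_Q (hi : i ≠ mu m) : v.Q = 0 := by
  have h := congrArg (fun z => z.Q) (hv (eps (mu m)))
  simpa [hi, LC_E hv 0] using h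

end LC

/-! ### right character analysis -/

lemma add_one_ne_nu {i : Fin (m+2)} (hi : i ≠ mu m) : i + 1 ≠ nu m := by
  intro h
  exact hi (by rw [← mu_add_one] at h; exact add_right_cancel h)

lemma add_one_ne_zero {i : Fin (m+2)} (hi : i ≠ nu m) : i + 1 ≠ 0 := by
  intro h
  exact hi (by rw [← nu_add_one (m := m)] at h; exact add_right_cancel h)

lemma RC_gen {i : Fin (m+2)} (hiμ : i ≠ mu m) (hiν : i ≠ nu m) {u : Lam k m}
    (hu : ∀ x : Lam k m, u * x = x.E (i+1) • u) : u = u.Aa i • ar i := by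
  have hE : ∀ j, u.E j = 0 := by
    intro j
    have h := congrArg (fun z => z.Aa j) (hu (ar j))
    simpa using h
  have hA : ∀ j, j ≠ i → u.Aa j = 0 := by
    intro j hj
    have h := congrArg (fun z => z.Aa j) (hu (eps (j+1)))
    have hne : i + 1 ≠ j + 1 := fun hc => hj (add_right_cancel hc).symm
    simpa [hne] using h
  have hW : u.W = 0 := by
    have h := congrArg (fun z => z.W) (hu (eps (nu m)))
    simpa [add_one_ne_nu hiμ, hE] using h
  have hD : u.D = 0 := by
    have h := congrArg (fun z => z.D) (hu (eps 0))
    simpa [add_one_ne_zero hiν, hE] using h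
  have hP : u.P = 0 := by
    have h := congrArg (fun z => z.P) (hu (eps 0))
    simpa [add_one_ne_zero hiν, hE, hW] using h
  have hQ : u.Q = 0 := by
    have h := congrArg (fun z => z.Q) (hu (eps 0))
    simpa [add_one_ne_zero hiν, hE, hA (mu m) (Ne.symm hiμ)] using h
  ext j <;> simp [hE, hW, hD, hP, hQ]
  rcases eq_or_ne j i with rfl | hj
  · simp
  · simp [hA j hj, hj]


lemma RC_nu {u₁ u₂ : Lam k m}
    (hu : ∀ x : Lam k m, u₁ * x = x.E (nu m) • u₁ + x.Aa (nu m) • u₂) :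
    u₁ = u₁.W • wb ∧ u₂ = u₁.W • pb := by
  have hE : ∀ j, j ≠ nu m → u₁.E j = 0 := by
    intro j hj
    have h := congrArg (fun z => z.E j) (hu (eps j))
    simpa [Ne.symm hj] using h
  have hEν : u₁.E (nu m) = 0 := by
    have h := congrArg (fun z => z.W) (hu wb)
    simpa using h
  have hE' : ∀ j, u₁.E j = 0 := by
    intro j
    rcases eq_or_ne j (nu m) with rfl | hj
    · exact hEν
    · exact hE j hj
  have hA : ∀ j, j ≠ mu m → u₁.Aa j = 0 := by
    intro j hj
    have h := congrArg (fun z => z.Aa j) (hu (eps (j+1)))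
    have h1 : nu m ≠ j + 1 := fun hc => hj (add_right_cancel ((mu_add_one).trans hc)).symm
    simpa [h1] using h
  have hAμ : u₁.Aa (mu m) = 0 := by
    have h := congrArg (fun z => z.Q) (hu db)
    simpa using h
  have hD : u₁.D = 0 := by
    have h := congrArg (fun z => z.D) (hu (eps 0))
    simpa [Ne.symm (nu_ne_zero (m := m)), nu_ne_zero, hE'] using h
  have hP : u₁.P = 0 := by
    have h := congrArg (fun z => z.P) (hu (eps 0))
    simpa [Ne.symm (nu_ne_zero (m := m)), nu_ne_zero, hE'] using h
  have hQ : u₁.Q = 0 := by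
    have h := congrArg (fun z => z.Q) (hu (eps 0))
    simpa [Ne.symm (nu_ne_zero (m := m)), nu_ne_zero, hE', hAμ] using h
  have hu2 : u₂ = u₁ * ar (nu m) := by
    have h := hu (ar (nu m))
    simpa [hEν] using h.symm
  constructor
  · ext j <;> simp [hE', hD, hP, hQ]
    rcases eq_or_ne j (mu m) with rfl | hj
    · simp [hAμ]
    · simp [hA j hj]
  · rw [hu2]
    ext j <;> simp [hE', hD, hP, hQ, hAμ]

lemma RC_mu {u₁ u₂ : Lam k m}
    (hu : ∀ x : Lam k m, u₁ * x = x.E (nu m) • u₁ + x.D • u₂) :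
    u₁ = u₁.Aa (mu m) • ar (mu m) ∧ u₂ = u₁.Aa (mu m) • qb := by
  have hE : ∀ j, j ≠ nu m → u₁.E j = 0 := by
    intro j hj
    have h := congrArg (fun z => z.E j) (hu (eps j))
    simpa [Ne.symm hj] using h
  have hEν : u₁.E (nu m) = 0 := by
    have h := congrArg (fun z => z.W) (hu wb)
    simpa using h
  have hE' : ∀ j, u₁.E j = 0 := by
    intro j
    rcases eq_or_ne j (nu m) with rfl | hj
    · exact hEν
    · exact hE j hj
  have hA : ∀ j, j ≠ mu m → u₁.Aa j = 0 := by
    intro j hj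
    have h := congrArg (fun z => z.Aa j) (hu (eps (j+1)))
    have h1 : nu m ≠ j + 1 := fun hc => hj (add_right_cancel ((mu_add_one).trans hc)).symm
    simpa [h1] using h
  have hW : u₁.W = 0 := by
    have h := congrArg (fun z => z.P) (hu (ar (nu m)))
    simpa [hE'] using h
  have hD : u₁.D = 0 := by
    have h := congrArg (fun z => z.D) (hu (eps 0))
    simpa [Ne.symm (nu_ne_zero (m := m)), nu_ne_zero, hE'] using h
  have hP : u₁.P = 0 := by
    have h := congrArg (fun z => z.P) (hu (eps 0))
    simpa [Ne.symm (nu_ne_zero (m := m)), nu_ne_zero, hE', hW] using h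
  have hQ : u₁.Q = 0 := by
    have h := congrArg (fun z => z.Q) (hu (eps 0))
    simpa [Ne.symm (nu_ne_zero (m := m)), nu_ne_zero, hE', hA] using h
  have hu2 : u₂ = u₁ * db := by
    have h := hu db
    simpa [hEν] using h.symm
  constructor
  · ext j <;> simp [hE', hW, hD, hP, hQ]
    rcases eq_or_ne j (mu m) with rfl | hj
    · simp
    · simp [hA j hj, hj]
  · rw [hu2]
    ext j <;> simp [hE', hEν, hW, hD, hP, hQ]


/-! ### bijectivity of the double-dual evaluation on the simple modules -/

lemma op_smul_apply (i : Fin (m+2)) (x : Lam k m) (f : Sv k m i →ₗ[Lam k m] Lam k m)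
    (c : Sv k m i) : ((MulOpposite.op x) • f) c = f c * x := rfl

lemma Phi_ksmul (i : Fin (m+2))
    (Φ : (Sv k m i →ₗ[Lam k m] Lam k m) →ₗ[(Lam k m)ᵐᵒᵖ] Lam k m) (c : k)
    (f : Sv k m i →ₗ[Lam k m] Lam k m) : Φ (c • f) = c • Φ f := by
  have h1 : c • f = (MulOpposite.op (algebraMap k (Lam k m) c)) • f := by
    refine LinearMap.ext fun s => ?_
    rw [op_smul_apply, LinearMap.smul_apply, ← Algebra.commutes, ← Algebra.smul_def]
  rw [h1, map_smul]
  show Φ f * algebraMap k (Lam k m) c = c • Φ f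
  rw [← Algebra.commutes, ← Algebra.smul_def]

lemma dualEval_apply (i : Fin (m+2)) (c : Sv k m i) (f : Sv k m i →ₗ[Lam k m] Lam k m) :
    dualEval (Lam k m) (Sv k m i) c f = f c := rfl

theorem dualEval_Sv_bijective (i : Fin (m+2)) :
    Function.Bijective (dualEval (Lam k m) (Sv k m i)) := by
  classical
  constructor
  · -- injectivity
    have hinj : ∀ c : Sv k m i, dualEval (Lam k m) (Sv k m i) c = 0 → c = 0 := by
      intro c hc
      rcases eq_or_ne i (nu m) with rfl | hi
      · have h := congrArg (fun z => Lam.W z) (congrArg (fun Φ => Φ (mkD _ wb lc_wb)) hc)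
        simpa [dualEval_apply] using h
      · have h := congrArg (fun z => Lam.Aa z i)
          (congrArg (fun Φ => Φ (mkD i (ar i) (lc_ar hi))) hc)
        simpa [dualEval_apply] using h
    intro a b hab
    have h0 : dualEval (Lam k m) (Sv k m i) (a - b) = 0 := by
      rw [map_sub, hab, sub_self]
    have := hinj _ h0
    rwa [sub_eq_zero] at this
  · -- surjectivity
    intro Φ
    rcases eq_or_ne i (nu m) with rfl | hiν
    · -- case i = ν
      set f₀ := mkD (nu m) (wb : Lam k m) lc_wb with hf₀
      set f₁ := mkD (nu m) (pb : Lam k m) lc_pb with hf₁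
      set u₁ := Φ f₀ with hu₁
      set u₂ := Φ f₁ with hu₂
      have hrel : ∀ x : Lam k m, u₁ * x = x.E (nu m) • u₁ + x.Aa (nu m) • u₂ := by
        intro x
        have h1 : (MulOpposite.op x) • f₀ = x.E (nu m) • f₀ + x.Aa (nu m) • f₁ := by
          refine LinearMap.ext fun c => ?_
          rw [op_smul_apply]
          simp only [LinearMap.add_apply, LinearMap.smul_apply, hf₀, hf₁, mkD_apply]
          rw [smul_mul_assoc, wb_mul_right]
          rw [smul_add, smul_comm (ofSv c), smul_comm (ofSv c)]
        calc u₁ * x = (MulOpposite.op x) • Φ f₀ := rfl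
          _ = Φ ((MulOpposite.op x) • f₀) := (map_smul Φ _ _).symm
          _ = Φ (x.E (nu m) • f₀ + x.Aa (nu m) • f₁) := by rw [h1]
          _ = x.E (nu m) • u₁ + x.Aa (nu m) • u₂ := by
              rw [map_add, Phi_ksmul, Phi_ksmul]
      obtain ⟨hu1, hu2⟩ := RC_nu hrel
      refine ⟨toSv (nu m) u₁.W, ?_⟩
      refine LinearMap.ext fun f => ?_
      set v := f (toSv (nu m) (1:k)) with hv_def
      have hlc : ∀ x : Lam k m, x * v = x.E (nu m) • v := dual_val_lc (nu m) f
      have hvrep : v = v.W • wb + v.P • pb := by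
        ext j <;> simp [LC_E hlc, LC_D hlc, LC_Q hlc (Ne.symm mu_ne_nu)]
        rcases eq_or_ne j (nu m) with rfl | hj
        · simp [LC_Aanu hlc]
        · simp [LC_Aa hlc hj]
      have hfrep : f = v.W • f₀ + v.P • f₁ := by
        refine LinearMap.ext fun c => ?_
        rw [dual_apply_eq (nu m) f c, ← hv_def]
        simp only [LinearMap.add_apply, LinearMap.smul_apply, hf₀, hf₁, mkD_apply]
        conv_lhs => rw [hvrep]
        rw [smul_add, smul_comm (ofSv c), smul_comm (ofSv c)]
      have hL : dualEval (Lam k m) (Sv k m (nu m)) (toSv (nu m) u₁.W) f = u₁.W • v := by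
        rw [dualEval_apply, dual_apply_eq (nu m) f (toSv (nu m) u₁.W), ofSv_toSv, ← hv_def]
      have hR : Φ f = u₁.W • v :=
        calc Φ f = Φ (v.W • f₀ + v.P • f₁) := by rw [← hfrep]
          _ = v.W • u₁ + v.P • u₂ := by rw [map_add, Phi_ksmul, Phi_ksmul]
          _ = v.W • (u₁.W • wb) + v.P • (u₁.W • pb) := by rw [← hu1, ← hu2]
          _ = u₁.W • v := by
              conv_rhs => rw [hvrep]
              rw [smul_add, smul_smul, smul_smul, smul_smul, smul_smul,
                mul_comm v.W u₁.W, mul_comm v.P u₁.W]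
      rw [hL, hR]
    rcases eq_or_ne i (mu m) with rfl | hiμ
    · -- case i = μ
      set f₀ := mkD (mu m) (ar (mu m) : Lam k m) (lc_ar mu_ne_nu) with hf₀
      set f₁ := mkD (mu m) (qb : Lam k m) lc_qb with hf₁
      set u₁ := Φ f₀ with hu₁
      set u₂ := Φ f₁ with hu₂
      have hrel : ∀ x : Lam k m, u₁ * x = x.E (nu m) • u₁ + x.D • u₂ := by
        intro x
        have h1 : (MulOpposite.op x) • f₀ = x.E (nu m) • f₀ + x.D • f₁ := by
          refine LinearMap.ext fun c => ?_
          rw [op_smul_apply]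
          simp only [LinearMap.add_apply, LinearMap.smul_apply, hf₀, hf₁, mkD_apply]
          rw [smul_mul_assoc, armu_mul_right]
          rw [smul_add, smul_comm (ofSv c), smul_comm (ofSv c)]
        calc u₁ * x = (MulOpposite.op x) • Φ f₀ := rfl
          _ = Φ ((MulOpposite.op x) • f₀) := (map_smul Φ _ _).symm
          _ = Φ (x.E (nu m) • f₀ + x.D • f₁) := by rw [h1]
          _ = x.E (nu m) • u₁ + x.D • u₂ := by rw [map_add, Phi_ksmul, Phi_ksmul]
      obtain ⟨hu1, hu2⟩ := RC_mu hrel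
      refine ⟨toSv (mu m) (u₁.Aa (mu m)), ?_⟩
      refine LinearMap.ext fun f => ?_
      set v := f (toSv (mu m) (1:k)) with hv_def
      have hlc : ∀ x : Lam k m, x * v = x.E (mu m) • v := dual_val_lc (mu m) f
      have hvrep : v = v.Aa (mu m) • ar (mu m) + v.Q • qb := by
        ext j <;> simp [LC_E hlc, LC_D hlc, LC_W hlc mu_ne_nu, LC_P hlc mu_ne_nu]
        rcases eq_or_ne j (mu m) with rfl | hj
        · simp
        · simp [LC_Aa hlc hj, hj]
      have hfrep : f = v.Aa (mu m) • f₀ + v.Q • f₁ := by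
        refine LinearMap.ext fun c => ?_
        rw [dual_apply_eq (mu m) f c, ← hv_def]
        simp only [LinearMap.add_apply, LinearMap.smul_apply, hf₀, hf₁, mkD_apply]
        conv_lhs => rw [hvrep]
        rw [smul_add, smul_comm (ofSv c), smul_comm (ofSv c)]
      have hL : dualEval (Lam k m) (Sv k m (mu m)) (toSv (mu m) (u₁.Aa (mu m))) f
          = u₁.Aa (mu m) • v := by
        rw [dualEval_apply, dual_apply_eq (mu m) f (toSv (mu m) (u₁.Aa (mu m))), ofSv_toSv,
          ← hv_def]
      have hR : Φ f = u₁.Aa (mu m) • v :=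
        calc Φ f = Φ (v.Aa (mu m) • f₀ + v.Q • f₁) := by rw [← hfrep]
          _ = v.Aa (mu m) • u₁ + v.Q • u₂ := by rw [map_add, Phi_ksmul, Phi_ksmul]
          _ = v.Aa (mu m) • (u₁.Aa (mu m) • ar (mu m)) + v.Q • (u₁.Aa (mu m) • qb) := by
              rw [← hu1, ← hu2]
          _ = u₁.Aa (mu m) • v := by
              conv_rhs => rw [hvrep]
              rw [smul_add, smul_smul, smul_smul, smul_smul, smul_smul,
                mul_comm (v.Aa (mu m)) (u₁.Aa (mu m)), mul_comm v.Q (u₁.Aa (mu m))]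
      rw [hL, hR]
    · -- generic case
      set f₀ := mkD i (ar i : Lam k m) (lc_ar hiν) with hf₀
      set u := Φ f₀ with hu_def
      have hrel : ∀ x : Lam k m, u * x = x.E (i+1) • u := by
        intro x
        have h1 : (MulOpposite.op x) • f₀ = x.E (i+1) • f₀ := by
          refine LinearMap.ext fun c => ?_
          rw [op_smul_apply]
          simp only [LinearMap.smul_apply, hf₀, mkD_apply]
          rw [smul_mul_assoc, ar_mul_right hiμ, smul_comm (ofSv c)]
        calc u * x = (MulOpposite.op x) • Φ f₀ := rfl
          _ = Φ ((MulOpposite.op x) • f₀) := (map_smul Φ _ _).symm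
          _ = Φ (x.E (i+1) • f₀) := by rw [h1]
          _ = x.E (i+1) • u := by rw [Phi_ksmul]
      have hu1 := RC_gen hiμ hiν hrel
      refine ⟨toSv i (u.Aa i), ?_⟩
      refine LinearMap.ext fun f => ?_
      set v := f (toSv i (1:k)) with hv_def
      have hlc : ∀ x : Lam k m, x * v = x.E i • v := dual_val_lc i f
      have hvrep : v = v.Aa i • ar i := by
        ext j <;> simp [LC_E hlc, LC_D hlc, LC_W hlc hiν, LC_P hlc hiν, LC_Q hlc hiμ]
        rcases eq_or_ne j i with rfl | hj
        · simp
        · simp [LC_Aa hlc hj, hj]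
      have hfrep : f = v.Aa i • f₀ := by
        refine LinearMap.ext fun c => ?_
        rw [dual_apply_eq i f c, ← hv_def]
        simp only [LinearMap.smul_apply, hf₀, mkD_apply]
        conv_lhs => rw [hvrep]
        rw [smul_comm (ofSv c)]
      have hL : dualEval (Lam k m) (Sv k m i) (toSv i (u.Aa i)) f = u.Aa i • v := by
        rw [dualEval_apply, dual_apply_eq i f (toSv i (u.Aa i)), ofSv_toSv, ← hv_def]
      have hR : Φ f = u.Aa i • v :=
        calc Φ f = Φ (v.Aa i • f₀) := by rw [← hfrep]
          _ = v.Aa i • u := by rw [Phi_ksmul]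
          _ = v.Aa i • (u.Aa i • ar i) := by rw [← hu1]
          _ = u.Aa i • v := by
              conv_rhs => rw [hvrep]
              rw [smul_smul, smul_smul, mul_comm (v.Aa i) (u.Aa i)]
      rw [hL, hR]


end Lam
end LamCon

section transport

variable {R : Type u} [Ring R] {M N : Type u} [AddCommGroup M] [AddCommGroup N]
  [Module R M] [Module R N]

/-- pullback of dual vectors along a linear map, as an `Rᵐᵒᵖ`-linear map -/
def dualPull (e : M →ₗ[R] N) : (N →ₗ[R] R) →ₗ[Rᵐᵒᵖ] (M →ₗ[R] R) where
  toFun f := f.comp e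
  map_add' f g := rfl
  map_smul' a f := rfl

@[simp] lemma dualPull_apply (e : M →ₗ[R] N) (f : N →ₗ[R] R) (x : M) :
    dualPull e f x = f (e x) := rfl

/-- bijectivity of the double-dual evaluation transports along linear equivalences -/
theorem dualEval_bijective_of_equiv (e : M ≃ₗ[R] N)
    (h : Function.Bijective (dualEval R N)) : Function.Bijective (dualEval R M) := by
  classical
  set g : ((N →ₗ[R] R) →ₗ[Rᵐᵒᵖ] R) → ((M →ₗ[R] R) →ₗ[Rᵐᵒᵖ] R) :=
    fun Ψ => Ψ.comp (dualPull (e.symm : N →ₗ[R] M)) with hg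
  have hkey : dualEval R M = g ∘ dualEval R N ∘ e := by
    funext x
    refine LinearMap.ext fun f => ?_
    show f x = f (e.symm (e x))
    rw [e.symm_apply_apply]
  have hgbij : Function.Bijective g := by
    rw [Function.bijective_iff_has_inverse]
    refine ⟨fun Ψ => Ψ.comp (dualPull (e : M →ₗ[R] N)), fun Ψ => ?_, fun Ψ => ?_⟩
    · refine LinearMap.ext fun f => ?_
      show Ψ ((f.comp (e : M →ₗ[R] N)).comp (e.symm : N →ₗ[R] M)) = Ψ f
      congr 1
      refine LinearMap.ext fun x => ?_
      show f (e (e.symm x)) = f x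
      rw [e.apply_symm_apply]
    · refine LinearMap.ext fun f => ?_
      show Ψ ((f.comp (e.symm : N →ₗ[R] M)).comp (e : M →ₗ[R] N)) = Ψ f
      congr 1
      refine LinearMap.ext fun x => ?_
      show f (e.symm (e x)) = f x
      rw [e.symm_apply_apply]
  rw [hkey]
  exact hgbij.comp (h.comp e.bijective)

end transport

namespace LamCon
variable {k : Type u} [Field k] {m : ℕ}
namespace Lam

lemma fin_add_one_ne (j : Fin (m+2)) : j + 1 ≠ j := by
  intro h
  have h1 : j + 1 = j + 0 := by rw [h, add_zero]
  have := add_left_cancel h1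
  rw [Fin.ext_iff] at this
  simp [Nat.mod_eq_of_lt] at this

open Fin.NatCast in
/-- every central idempotent of `Lam` is trivial -/
lemma central_idem (z : Lam k m) (hc : ∀ x : Lam k m, z * x = x * z) (hz : z * z = z) :
    z = 0 ∨ z = 1 := by
  classical
  have hA : ∀ j, z.Aa j = 0 := by
    intro j
    have h := congrArg (fun y => y.Aa j) (hc (eps j))
    simpa [fin_add_one_ne j] using h.symm
  have hD : z.D = 0 := by
    have h := congrArg (fun y => y.D) (hc (eps 0))
    simpa [nu_ne_zero] using h
  have hP : z.P = 0 := by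
    have h := congrArg (fun y => y.P) (hc (eps 0))
    simpa [nu_ne_zero] using h
  have hW : z.W = 0 := by
    have h := congrArg (fun y => y.P) (hc (ar (nu m)))
    simpa [hP] using h
  have hE : ∀ j, z.E j = z.E (j+1) := by
    intro j
    have h := congrArg (fun y => y.Aa j) (hc (ar j))
    simpa [hA] using h
  have hE0 : ∀ l : ℕ, z.E ((l : Fin (m+2))) = z.E 0 := by
    intro l
    induction l with
    | zero => simp
    | succ n ih => rw [Nat.cast_succ, ← hE, ih]
  have hEconst : ∀ j, z.E j = z.E 0 := by
    intro j
    have := hE0 j.val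
    rwa [Fin.cast_val_eq_self] at this
  have hidem : z.E 0 * z.E 0 = z.E 0 := by
    have h := congrArg (fun y => y.E 0) hz
    simpa using h
  have hQ2 : z.E (mu m) * z.Q + z.Q * z.E 0 = z.Q := by
    have h := congrArg (fun y => y.Q) hz
    simpa [hA, hD] using h
  have h01 : z.E 0 = 0 ∨ z.E 0 = 1 := by
    have hz0 : z.E 0 * (z.E 0 - 1) = 0 := by rw [mul_sub, hidem, mul_one, sub_self]
    rcases mul_eq_zero.mp hz0 with h | h
    · exact Or.inl h
    · exact Or.inr (sub_eq_zero.mp h)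
  rcases h01 with h0 | h1
  · left
    have hq : z.Q = 0 := by
      rw [hEconst (mu m), h0] at hQ2
      simpa using hQ2.symm
    ext j <;> simp [hA, hD, hP, hW, hq, hEconst, h0]
  · right
    have hq : z.Q = 0 := by
      rw [hEconst (mu m), h1] at hQ2
      have h2 : z.Q + z.Q = z.Q := by simpa using hQ2
      have h3 : z.Q + z.Q = 0 + z.Q := by rw [zero_add]; exact h2
      exact add_right_cancel h3
    ext j <;> simp [hA, hD, hP, hW, hq, hEconst, h1]

/-- the algebra `Lam` is not self-injective -/
theorem not_self_injective : ¬ Module.Injective (Lam k m) (Lam k m) := by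
  intro hinj
  classical
  -- the test module
  let X := Sv k m (mu m) × Sv k m (nu m)
  let f : X →ₗ[Lam k m] Lam k m :=
    { toFun := fun st => ofSv st.1 • ar (mu m) + ofSv st.2 • wb
      map_add' := by
        intro a b
        show (ofSv a.1 + ofSv b.1) • ar (mu m) + (ofSv a.2 + ofSv b.2) • wb = _
        rw [add_smul, add_smul]
        abel
      map_smul' := by
        intro x st
        show (x.E (mu m) * ofSv st.1) • ar (mu m) + (x.E (nu m) * ofSv st.2) • wb
          = x • (ofSv st.1 • ar (mu m) + ofSv st.2 • wb)
        rw [smul_eq_mul, mul_add, mul_smul_comm, mul_smul_comm, lc_ar mu_ne_nu, lc_wb,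
          smul_smul, smul_smul, mul_comm (ofSv st.1), mul_comm (ofSv st.2)] }
  let g : X →ₗ[Lam k m] Lam k m :=
    { toFun := fun st => ofSv st.1 • ar (mu m)
      map_add' := by
        intro a b
        show (ofSv a.1 + ofSv b.1) • ar (mu m) = _
        rw [add_smul]
      map_smul' := by
        intro x st
        show (x.E (mu m) * ofSv st.1) • ar (mu m) = x • (ofSv st.1 • ar (mu m))
        rw [smul_eq_mul, mul_smul_comm, lc_ar mu_ne_nu, smul_smul, mul_comm (ofSv st.1)] }
  have finj : Function.Injective f := by
    intro a b hab
    have h1 := congrArg (fun y => y.Aa (mu m)) hab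
    have h2 := congrArg (fun y => y.W) hab
    simp only [f, LinearMap.coe_mk, AddHom.coe_mk] at h1 h2
    simp at h1 h2
    exact Prod.ext h1 h2
  obtain ⟨h', hh⟩ := hinj.out f finj g
  have hf1 : f (toSv (mu m) (1:k), 0) = ar (mu m) := by
    simp only [f, LinearMap.coe_mk, AddHom.coe_mk]
    simp
  have hf2 : f (0, toSv (nu m) (1:k)) = wb := by
    simp only [f, LinearMap.coe_mk, AddHom.coe_mk]
    simp
  have hg1 : g (toSv (mu m) (1:k), 0) = ar (mu m) := by
    simp only [g, LinearMap.coe_mk, AddHom.coe_mk]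
    simp
  have hg2 : g (0, toSv (nu m) (1:k)) = 0 := by
    simp only [g, LinearMap.coe_mk, AddHom.coe_mk]
    simp
  have e1 : h' (ar (mu m)) = ar (mu m) := by
    conv_lhs => rw [← hf1]
    rw [hh]
    exact hg1
  have e2 : h' wb = 0 := by
    conv_lhs => rw [← hf2]
    rw [hh]
    exact hg2
  set mm := h' 1 with hmm
  have hx1 : ar (mu m) * mm = ar (mu m) := by
    have : h' (ar (mu m) • (1 : Lam k m)) = ar (mu m) • h' 1 := map_smul h' _ _
    rw [smul_eq_mul, mul_one, e1] at this
    rw [← hmm] at this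
    rw [smul_eq_mul] at this
    exact this.symm
  have hx2 : wb * mm = 0 := by
    have : h' (wb • (1 : Lam k m)) = wb • h' 1 := map_smul h' _ _
    rw [smul_eq_mul, mul_one, e2] at this
    rw [← hmm] at this
    rw [smul_eq_mul] at this
    exact this.symm
  have c1 : mm.E (nu m) = 1 := by
    have h := congrArg (fun y => y.Aa (mu m)) hx1
    simpa [mu_add_one] using h
  have c2 : mm.E (nu m) = 0 := by
    have h := congrArg (fun y => y.W) hx2
    simpa using h
  rw [c1] at c2
  exact one_ne_zero c2

end Lam
end LamCon

open LamCon

/-- For every field `k` and every integer `n ≥ 2` there exists a finite-dimensional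
`k`-algebra `A` of `k`-dimension `2n+4`, which is not isomorphic to the direct product of
two nonzero algebras, which has exactly `n` isomorphism classes of simple left `A`-modules,
all of which are reflexive, and which is not self-injective. -/
theorem exists_connected_algebra_n_simples_all_reflexive_not_selfinjective
    (k : Type u) [Field k] (n : ℕ) (hn : 2 ≤ n) :
    ∃ A : AlgCat.{u} k,
      FiniteDimensional k A ∧
      Module.finrank k A = 2 * n + 4 ∧
      (¬ ∃ B C : AlgCat.{u} k,
        Nontrivial B ∧ Nontrivial C ∧ Nonempty (A ≃ₐ[k] (B × C))) ∧
      (∃ S : Fin n → ModuleCat.{u} A,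
        (∀ i, IsSimpleModule A (S i)) ∧
        (∀ i j, i ≠ j → IsEmpty (S i ≃ₗ[A] S j)) ∧
        (∀ (T : Type u) [AddCommGroup T] [Module A T],
          IsSimpleModule A T → ∃ i, Nonempty (T ≃ₗ[A] S i))) ∧
      (∀ (S : Type u) [AddCommGroup S] [Module A S],
        IsSimpleModule A S → Function.Bijective (dualEval A S)) ∧
      ¬ Module.Injective A A := by
  classical
  obtain ⟨m, rfl⟩ : ∃ m, n = m + 2 := ⟨n - 2, by omega⟩
  refine ⟨AlgCat.of k (Lam k m), ?_, ?_, ?_, ?_, ?_, ?_⟩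
  · -- finite dimensional
    exact inferInstanceAs (Module.Finite k (Lam k m))
  · -- dimension
    exact Lam.finrank_lam
  · -- connectedness
    rintro ⟨B, C, hB, hC, ⟨e⟩⟩
    haveI := hB
    haveI := hC
    set z := e.symm (1, 0) with hz_def
    have hzz : z * z = z := by
      rw [hz_def, ← map_mul]
      congr 1
      apply Prod.ext <;> simp
    have hcen : ∀ x, z * x = x * z := by
      intro x
      conv_lhs => rw [show x = e.symm (e x) from (e.symm_apply_apply x).symm]
      conv_rhs => rw [show x = e.symm (e x) from (e.symm_apply_apply x).symm]
      rw [hz_def, ← map_mul, ← map_mul]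
      congr 1
      apply Prod.ext <;> simp
    rcases Lam.central_idem z hcen hzz with h | h
    · have h1 : ((1, 0) : ↑B × ↑C) = 0 := by
        have h2 := e.apply_symm_apply ((1 : ↑B), (0 : ↑C))
        rw [← hz_def, h, map_zero] at h2
        exact h2.symm
      exact one_ne_zero (congrArg Prod.fst h1)
    · have h1 : ((1, 0) : ↑B × ↑C) = 1 := by
        have h2 := e.apply_symm_apply ((1 : ↑B), (0 : ↑C))
        rw [← hz_def, h, map_one] at h2
        exact h2.symm
      exact zero_ne_one (congrArg Prod.snd h1)
  · -- the n simple modules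
    refine ⟨fun i => @ModuleCat.of _ _ (Sv k m i) _
      (inferInstanceAs (Module (Lam k m) (Sv k m i))), fun i => ?_, fun i j hij => ?_, ?_⟩
    · exact inferInstanceAs (IsSimpleModule (Lam k m) (Sv k m i))
    · exact Lam.sv_not_iso hij
    · intro T _ instT hT
      letI : Module (Lam k m) T := instT
      have hT' : IsSimpleModule (Lam k m) T := hT
      obtain ⟨i, ⟨e⟩⟩ := Lam.simple_classify hT'
      exact ⟨i, ⟨e⟩⟩
  · -- reflexivity of all simple modules
    intro S _ instS hS
    letI : Module (Lam k m) S := instS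
    have hS' : IsSimpleModule (Lam k m) S := hS
    obtain ⟨i, ⟨e⟩⟩ := Lam.simple_classify hS'
    exact dualEval_bijective_of_equiv e (Lam.dualEval_Sv_bijective i)
  · -- not self-injective
    exact Lam.not_self_injective
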